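/- Let d ≥ 2, let ρ be a real number with −1/(d−1) < ρ < 1 (so that the same bound also holds with d+1 in place of d, i.e. −1/d < ρ < 1 in the case ρ < 0), and let τ be a real number. Then the reduction in conditional variance obtained by adding a (d+1)-st identically correlated predictor is X(d+1) = V(d) − V(d+1) = τ²/(1−ρ) + (ρτ²/(1−ρ)) · ( d²/(1+(d−1)ρ) − (d+1)²/(1+dρ) ), and this expression simplifies to X(d+1) = τ²(1−ρ)/((1+dρ)(1+(d−1)ρ)). -/

import Mathlib

open Matrix

/-- The `d × d` equicorrelation matrix `(1-ρ)·I + ρ·𝟙𝟙ᵀ`. -/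
def equicorr (d : ℕ) (ρ : ℝ) : Matrix (Fin d) (Fin d) ℝ :=
  (1 - ρ) • (1 : Matrix (Fin d) (Fin d) ℝ) + ρ • Matrix.of fun _ _ => (1 : ℝ)

/-- The residual conditional variance `V(d) = 1 - τ̄ᵀ Σ₁₁⁻¹ τ̄`, where
`τ̄ = τ·𝟙 ∈ ℝᵈ`. -/
noncomputable def Vres (d : ℕ) (ρ τ : ℝ) : ℝ :=
  1 - (fun _ : Fin d => τ) ⬝ᵥ ((equicorr d ρ)⁻¹ *ᵥ fun _ : Fin d => τ)

/-- For `d ≥ 2` and `-1/(d-1) < ρ < 1` (with the bound also holding for `d+1`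
predictors, i.e. `-1/d < ρ < 1`), the reduction in conditional variance from
adding a `(d+1)`-st identically correlated predictor is
`X(d+1) = V(d) - V(d+1) = τ²/(1-ρ) + (ρτ²/(1-ρ))(d²/(1+(d-1)ρ) - (d+1)²/(1+dρ))`,
which simplifies to `τ²(1-ρ)/((1+dρ)(1+(d-1)ρ))`. -/
lemma J_mul_J (d : ℕ) :
    (Matrix.of fun _ _ => (1:ℝ) : Matrix (Fin d) (Fin d) ℝ) * Matrix.of (fun _ _ => 1) =
      (d : ℝ) • Matrix.of (fun _ _ => 1) := by
  ext i j
  simp [Matrix.mul_apply]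

lemma equicorr_inv_mulVec_const (d : ℕ) (ρ τ : ℝ) (hc : (1:ℝ) - ρ ≠ 0)
    (hk : 1 + ((d:ℝ) - 1) * ρ ≠ 0) :
    (equicorr d ρ)⁻¹ *ᵥ (fun _ : Fin d => τ) = fun _ => τ / (1 + ((d:ℝ) - 1) * ρ) := by
  set c : ℝ := 1 - ρ with hcdef
  set k : ℝ := 1 + ((d:ℝ) - 1) * ρ with hkdef
  set B : Matrix (Fin d) (Fin d) ℝ :=
    (1/c) • 1 + (-ρ/(c*k)) • Matrix.of (fun _ _ => 1) with hB
  have hAB : equicorr d ρ * B = 1 := by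
    rw [equicorr, hB]
    simp only [Matrix.add_mul, Matrix.mul_add, Matrix.smul_mul, Matrix.mul_smul,
      Matrix.one_mul, Matrix.mul_one, J_mul_J, smul_smul]
    rw [smul_add, smul_add, smul_smul, smul_smul, smul_smul, smul_smul,
      add_assoc, ← add_smul, ← add_smul]
    have h1 : 1/c * (1 - ρ) = 1 := by rw [hcdef]; field_simp; exact div_self hc
    have h2 : 1/c * ρ + (-ρ/(c*k) * (1 - ρ) + -ρ/(c*k) * (ρ * (d:ℝ))) = 0 := by
      field_simp
      rw [hkdef, hcdef]
      ring
    rw [h1, one_smul, h2, zero_smul, add_zero]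
  have hinv : (equicorr d ρ)⁻¹ = B := Matrix.inv_eq_right_inv hAB
  rw [hinv]
  funext i
  simp [hB, Matrix.mulVec, dotProduct, Matrix.one_apply, mul_comm,
    Finset.sum_add_distrib, Finset.sum_ite_eq, mul_add]
  field_simp
  rw [hkdef, hcdef]
  ring

theorem variance_reduction_eq (d : ℕ) (hd : 2 ≤ d) (ρ : ℝ)
    (hρ₁ : -1 / ((d : ℝ) - 1) < ρ) (hρ₁' : -1 / (d : ℝ) < ρ) (hρ₂ : ρ < 1) (τ : ℝ) :
    Vres d ρ τ - Vres (d + 1) ρ τ =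
        τ ^ 2 / (1 - ρ) +
          (ρ * τ ^ 2 / (1 - ρ)) *
            ((d : ℝ) ^ 2 / (1 + ((d : ℝ) - 1) * ρ) -
              ((d : ℝ) + 1) ^ 2 / (1 + (d : ℝ) * ρ)) ∧
      Vres d ρ τ - Vres (d + 1) ρ τ =
        τ ^ 2 * (1 - ρ) / ((1 + (d : ℝ) * ρ) * (1 + ((d : ℝ) - 1) * ρ)) := by
  have hd1 : (1:ℝ) ≤ (d:ℝ) - 1 := by
    have : (2:ℝ) ≤ (d:ℝ) := by exact_mod_cast hd
    linarith
  have hc : (1:ℝ) - ρ ≠ 0 := by linarith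
  have hk : (1:ℝ) + ((d:ℝ) - 1) * ρ > 0 := by
    rcases le_or_gt 0 ρ with h | h
    · nlinarith
    · have := (div_lt_iff₀ (by linarith : (0:ℝ) < (d:ℝ) - 1)).mp hρ₁
      nlinarith
  have hk' : (1:ℝ) + (d:ℝ) * ρ > 0 := by
    rcases le_or_gt 0 ρ with h | h
    · nlinarith
    · have hdpos : (0:ℝ) < (d:ℝ) := by linarith
      have := (div_lt_iff₀ hdpos).mp hρ₁'
      nlinarith
  have h1 : Vres d ρ τ = 1 - (d:ℝ) * (τ * (τ / (1 + ((d:ℝ) - 1) * ρ))) := by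
    rw [Vres, equicorr_inv_mulVec_const d ρ τ hc hk.ne']
    simp [dotProduct]
  have h2 : Vres (d+1) ρ τ = 1 - ((d:ℝ)+1) * (τ * (τ / (1 + (d:ℝ) * ρ))) := by
    rw [Vres, equicorr_inv_mulVec_const (d+1) ρ τ hc (by push_cast; rw [add_sub_cancel_right]; exact hk'.ne')]
    simp [dotProduct]
  constructor
  · rw [h1, h2]; field_simp; ring
  · rw [h1, h2]; field_simp; ring
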